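/- For every even positive integer p, the Turán number ex(p+3, B_p) equals p(p+4)/2. -/

import Mathlib

open SimpleGraph
open Finset

/-- A graph contains the book `B_p` iff some edge has at least `p` common neighbors. -/
def SimpleGraph.ContainsBook {V : Type*} (G : SimpleGraph V) (p : ℕ) : Prop :=
  ∃ x y, G.Adj x y ∧ p ≤ (G.commonNeighbors x y).ncard

/-- The Turán number `ex(n, B_p)`: the maximum number of edges of a simple graph
on `n` vertices containing no book `B_p`. -/
noncomputable def bookTuranNumber (n p : ℕ) : ℕ :=
  sSup {e : ℕ | ∃ G : SimpleGraph (Fin n), ¬ G.ContainsBook p ∧ G.edgeSet.ncard = e}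

/-- The disjoint union of `m` copies of the complete graph `K_k`. -/
def unionComplete (m k : ℕ) : SimpleGraph (Fin m × Fin k) :=
  SimpleGraph.fromRel fun a b => a.1 = b.1

/-- The join `G ∨ H` of two graphs. -/
def SimpleGraph.join {α β : Type*} (G : SimpleGraph α) (H : SimpleGraph β) :
    SimpleGraph (α ⊕ β) := (Gᶜ ⊕g Hᶜ)ᶜ

/-- A disjoint union of cycles `C_{i 0} + ⋯ + C_{i (t-1)}`. -/
def cycleFamily (t : ℕ) (i : Fin t → ℕ) : SimpleGraph (Σ j : Fin t, Fin (i j)) :=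
  SimpleGraph.fromRel fun a b => ∃ h : a.1 = b.1, (SimpleGraph.cycleGraph (i b.1)).Adj (h ▸ a.2) b.2


lemma myComplCard {n : ℕ} (G : SimpleGraph (Fin n)) :
    G.edgeSet.ncard + Gᶜ.edgeSet.ncard = n.choose 2 := by
  classical
  have h1 : (G ⊔ Gᶜ) = (⊤ : SimpleGraph (Fin n)) := sup_compl_eq_top
  have h3 : G.edgeFinset.card + Gᶜ.edgeFinset.card = ((G ⊔ Gᶜ).edgeFinset).card := by
    rw [edgeFinset_sup, Finset.card_union_of_disjoint (disjoint_edgeFinset.2 disjoint_compl_right)]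
  have h4 := card_edgeFinset_top_eq_card_choose_two (V := Fin n)
  simp only [Fintype.card_fin] at h4
  rw [Set.ncard_eq_toFinset_card', Set.ncard_eq_toFinset_card']
  calc G.edgeSet.toFinset.card + Gᶜ.edgeSet.toFinset.card
      = G.edgeFinset.card + Gᶜ.edgeFinset.card := rfl
    _ = ((G ⊔ Gᶜ).edgeFinset).card := h3
    _ = (G ⊔ Gᶜ).edgeSet.ncard := (Set.ncard_eq_toFinset_card' _).symm
    _ = (⊤ : SimpleGraph (Fin n)).edgeSet.ncard := by rw [h1]
    _ = (⊤ : SimpleGraph (Fin n)).edgeFinset.card := Set.ncard_eq_toFinset_card' _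
    _ = n.choose 2 := h4

lemma mySumOnes {α : Type*} [DecidableEq α] (s : Finset α) (f : α → ℕ)
    (h1 : ∀ v ∈ s, 1 ≤ f v) (h : ∑ v ∈ s, f v = s.card) : ∀ v ∈ s, f v = 1 := by
  intro v hv
  by_contra hne
  have h2 : 2 ≤ f v := by have := h1 v hv; omega
  have hsplit : ∑ u ∈ s, f u = f v + ∑ u ∈ s.erase v, f u := (Finset.add_sum_erase s f hv).symm
  have hge : s.card - 1 ≤ ∑ u ∈ s.erase v, f u := by
    calc s.card - 1 = (s.erase v).card := (Finset.card_erase_of_mem hv).symm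
      _ = ∑ u ∈ s.erase v, 1 := by simp
      _ ≤ ∑ u ∈ s.erase v, f u := Finset.sum_le_sum fun u hu => h1 u (Finset.mem_of_mem_erase hu)
  have hcard : 1 ≤ s.card := Finset.card_pos.2 ⟨v, hv⟩
  omega

lemma myDegSum {p : ℕ} (hp2 : 2 ≤ p) (H : SimpleGraph (Fin (p+3))) [DecidableRel H.Adj]
    (hP : ∀ x y : Fin (p+3), x ≠ y → ¬H.Adj x y →
      2 ≤ (((H.neighborFinset x ∪ H.neighborFinset y) \ {x, y}).card))
    (hpe : p % 2 = 0) :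
    p + 6 ≤ ∑ v, H.degree v := by
  classical
  by_contra hlt
  push_neg at hlt
  have heven : (∑ v, H.degree v) % 2 = 0 := by
    have := H.sum_degrees_eq_twice_card_edges
    omega
  by_cases hiso : ∃ x, H.degree x = 0
  · obtain ⟨x, hx⟩ := hiso
    have hNx : H.neighborFinset x = ∅ := Finset.card_eq_zero.1 hx
    have hdeg : ∀ y, y ≠ x → 2 ≤ H.degree y := by
      intro y hy
      have hnadj : ¬H.Adj x y := by
        intro h
        have : y ∈ H.neighborFinset x := (mem_neighborFinset _ _ _).2 h
        simp [hNx] at this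
      have := hP x y (Ne.symm hy) hnadj
      calc 2 ≤ ((H.neighborFinset x ∪ H.neighborFinset y) \ {x, y}).card := this
        _ ≤ (H.neighborFinset y).card := by
            apply Finset.card_le_card
            intro z hz
            simp only [Finset.mem_sdiff, Finset.mem_union, hNx, Finset.notMem_empty,
              false_or] at hz
            exact hz.1
        _ = H.degree y := rfl
    have : 2 * (p + 2) ≤ ∑ v, H.degree v := by
      calc 2 * (p + 2) = ∑ _v ∈ (univ : Finset (Fin (p+3))).erase x, 2 := by
            simp [Finset.card_erase_of_mem, Finset.card_univ]; ring
        _ ≤ ∑ v ∈ (univ : Finset (Fin (p+3))).erase x, H.degree v :=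
            Finset.sum_le_sum fun v hv => hdeg v (Finset.ne_of_mem_erase hv)
        _ ≤ ∑ v, H.degree v := Finset.sum_le_sum_of_subset (Finset.subset_univ _)
    omega
  · push_neg at hiso
    have hmin : ∀ v, 1 ≤ H.degree v := fun v => Nat.one_le_iff_ne_zero.2 (hiso v)
    have hsum_ge : p + 3 ≤ ∑ v, H.degree v := by
      calc p + 3 = ∑ _v : Fin (p+3), 1 := by simp
        _ ≤ ∑ v, H.degree v := Finset.sum_le_sum fun v _ => hmin v
    have hsum : ∑ v, H.degree v = p + 4 := by omega
    -- exists vertex of degree ≥ 2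
    have hb : ∃ b, 2 ≤ H.degree b := by
      by_contra hno
      push_neg at hno
      have : ∀ v ∈ (univ : Finset (Fin (p+3))), H.degree v = 1 := by
        intro v _; have := hmin v; have := hno v; omega
      have : ∑ v, H.degree v = p + 3 := by
        rw [Finset.sum_congr rfl this]; simp
      omega
    obtain ⟨b, hb2⟩ := hb
    have hrest : ∀ v, v ≠ b → H.degree v = 1 := by
      intro v hv
      have hsplit : ∑ u, H.degree u = H.degree b + ∑ u ∈ univ.erase b, H.degree u :=
        (Finset.add_sum_erase _ _ (Finset.mem_univ b)).symm
      have hrsum : ∑ u ∈ univ.erase b, H.degree u ≤ p + 2 := by omega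
      have hrsum' : ∑ u ∈ univ.erase b, H.degree u = (univ.erase b).card := by
        have hge : (univ.erase b).card ≤ ∑ u ∈ univ.erase b, H.degree u := by
          calc (univ.erase b).card = ∑ _u ∈ univ.erase b, 1 := by simp
            _ ≤ _ := Finset.sum_le_sum fun u _ => hmin u
        have hcard : (univ.erase b).card = p + 2 := by
          simp [Finset.card_erase_of_mem, Finset.card_univ]
        omega
      exact mySumOnes _ _ (fun u _ => hmin u) hrsum' v (Finset.mem_erase.2 ⟨hv, Finset.mem_univ v⟩)
    have hdb : H.degree b = 2 := by
      have hsplit : ∑ u, H.degree u = H.degree b + ∑ u ∈ univ.erase b, H.degree u :=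
        (Finset.add_sum_erase _ _ (Finset.mem_univ b)).symm
      have : ∑ u ∈ univ.erase b, H.degree u = ∑ _u ∈ univ.erase b, 1 :=
        Finset.sum_congr rfl fun u hu => hrest u (Finset.ne_of_mem_erase hu)
      have hcard : (univ.erase b).card = p + 2 := by
        simp [Finset.card_erase_of_mem, Finset.card_univ]
      simp [this, hcard] at hsplit
      omega
    obtain ⟨a, c, hac, hNb⟩ := Finset.card_eq_two.1 hdb
    have hba : H.Adj b a := (mem_neighborFinset _ _ _).1 (by rw [hNb]; simp)
    have hbc : H.Adj b c := (mem_neighborFinset _ _ _).1 (by rw [hNb]; simp)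
    have hab : a ≠ b := fun h => H.irrefl (h ▸ hba)
    have hcb : c ≠ b := fun h => H.irrefl (h ▸ hbc)
    have hNa : H.neighborFinset a = {b} := by
      have h1 : H.degree a = 1 := hrest a hab
      obtain ⟨z, hz⟩ := Finset.card_eq_one.1 h1
      have : b ∈ H.neighborFinset a := (mem_neighborFinset _ _ _).2 hba.symm
      rw [hz] at this ⊢
      simp at this
      rw [this]
    have hNc : H.neighborFinset c = {b} := by
      have h1 : H.degree c = 1 := hrest c hcb
      obtain ⟨z, hz⟩ := Finset.card_eq_one.1 h1
      have : b ∈ H.neighborFinset c := (mem_neighborFinset _ _ _).2 hbc.symm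
      rw [hz] at this ⊢
      simp at this
      rw [this]
    have hnadj : ¬H.Adj a c := by
      intro h
      have : c ∈ H.neighborFinset a := (mem_neighborFinset _ _ _).2 h
      rw [hNa] at this
      simp at this
      exact hcb this
    have := hP a c hac hnadj
    rw [hNa, hNc] at this
    have hsub : (({b} ∪ {b} : Finset (Fin (p+3))) \ {a, c}).card ≤ 1 := by
      apply le_trans (Finset.card_le_card (Finset.sdiff_subset))
      simp
    omega
lemma myChoose (p : ℕ) (hpe : p % 2 = 0) : 2 * (p+3).choose 2 = p * (p + 4) + (p + 6) := by
  rw [Nat.choose_two_right]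
  have he : Even ((p+3) * (p+3-1)) := by
    apply Nat.even_mul.2 (Or.inr _)
    exact Nat.even_iff.2 (by omega)
  rw [Nat.two_mul_div_two_of_even he]
  have h : p + 3 - 1 = p + 2 := by omega
  rw [h]; ring

lemma myUpper {p : ℕ} (hp2 : 2 ≤ p) (hpe : p % 2 = 0) (G : SimpleGraph (Fin (p+3)))
    (h : ¬ G.ContainsBook p) : G.edgeSet.ncard ≤ p * (p + 4) / 2 := by
  classical
  have hP : ∀ x y : Fin (p+3), x ≠ y → ¬(Gᶜ).Adj x y →
      2 ≤ (((Gᶜ).neighborFinset x ∪ (Gᶜ).neighborFinset y) \ {x, y}).card := by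
    intro x y hxy hnadj
    have hadj : G.Adj x y := by
      by_contra hn
      exact hnadj ((G.compl_adj x y).2 ⟨hxy, hn⟩)
    have hcom : (G.commonNeighbors x y).ncard < p := by
      by_contra hc
      exact h ⟨x, y, hadj, by omega⟩
    set A : Finset (Fin (p+3)) := (G.commonNeighbors x y).toFinset with hA
    set B : Finset (Fin (p+3)) :=
      ((Gᶜ).neighborFinset x ∪ (Gᶜ).neighborFinset y) \ {x, y} with hB
    have hmemA : ∀ z, z ∈ A ↔ G.Adj x z ∧ G.Adj y z := by
      intro z; simp [hA, SimpleGraph.mem_commonNeighbors]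
    have hmemB : ∀ z, z ∈ B ↔ ((x ≠ z ∧ ¬G.Adj x z) ∨ (y ≠ z ∧ ¬G.Adj y z)) ∧ z ≠ x ∧ z ≠ y := by
      intro z; simp [hB, mem_neighborFinset, compl_adj, and_comm]
    have hU : A ∪ B = univ \ ({x, y} : Finset (Fin (p+3))) := by
      ext z
      by_cases hzx : z = x
      · subst hzx
        simp [hmemA, hmemB, G.irrefl]
      by_cases hzy : z = y
      · subst hzy
        simp [hmemA, hmemB, G.irrefl, hzx]
      · simp [hmemA, hmemB, hzx, hzy, Ne.symm hzx, Ne.symm hzy]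
        tauto
    have hD : Disjoint A B := by
      rw [Finset.disjoint_left]
      intro z hzA hzB
      rw [hmemA] at hzA
      rw [hmemB] at hzB
      tauto
    have hcardU : A.card + B.card = p + 1 := by
      rw [← Finset.card_union_of_disjoint hD, hU,
        Finset.card_sdiff_of_subset (Finset.subset_univ _), Finset.card_pair hxy]
      simp
    have hAcard : A.card = (G.commonNeighbors x y).ncard :=
      (Set.ncard_eq_toFinset_card' _).symm
    omega
  have hdeg := myDegSum hp2 Gᶜ hP hpe
  have hds : ∑ v, (Gᶜ).degree v = 2 * (Gᶜ).edgeFinset.card :=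
    SimpleGraph.sum_degrees_eq_twice_card_edges _
  have hef : (Gᶜ).edgeFinset.card = (Gᶜ).edgeSet.ncard := (Set.ncard_eq_toFinset_card' _).symm
  have hcc := myComplCard G
  have hch := myChoose p hpe
  rw [Nat.le_div_iff_mul_le (by norm_num : 0 < 2)]
  have h6 : p + 6 ≤ 2 * (Gᶜ).edgeSet.ncard := by omega
  linarith


def myTriMatch (p : ℕ) : SimpleGraph (Fin (p+3)) where
  Adj x y := x ≠ y ∧ ((x.val < 3 ∧ y.val < 3) ∨
    (3 ≤ x.val ∧ 3 ≤ y.val ∧ (x.val+1)/2 = (y.val+1)/2))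
  symm := ⟨by rintro x y ⟨h1, h2⟩; exact ⟨h1.symm, by tauto⟩⟩
  loopless := ⟨fun x h => h.1 rfl⟩

instance (p : ℕ) : DecidableRel (myTriMatch p).Adj :=
  fun x y => inferInstanceAs (Decidable (_ ∧ _))

lemma myTriMatch_adj (p : ℕ) (x y : Fin (p+3)) :
    (myTriMatch p).Adj x y ↔ x ≠ y ∧ ((x.val < 3 ∧ y.val < 3) ∨
      (3 ≤ x.val ∧ 3 ≤ y.val ∧ (x.val+1)/2 = (y.val+1)/2)) := Iff.rfl

lemma myDegTri {p : ℕ} (hpe : p % 2 = 0) (v : Fin (p+3)) :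
    (myTriMatch p).degree v = if v.val < 3 then 2 else 1 := by
  by_cases hv : v.val < 3
  · have ha : (v.val + 1) % 3 < p + 3 := by omega
    have hb : (v.val + 2) % 3 < p + 3 := by omega
    have hN : (myTriMatch p).neighborFinset v = {⟨(v.val+1)%3, ha⟩, ⟨(v.val+2)%3, hb⟩} := by
      ext u
      simp only [mem_neighborFinset, myTriMatch_adj, Finset.mem_insert, Finset.mem_singleton,
        Fin.ext_iff, ne_eq]
      have hu := u.isLt
      omega
    rw [← card_neighborFinset_eq_degree, hN, if_pos hv, Finset.card_pair]
    simp only [ne_eq, Fin.ext_iff]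
    omega
  · have hv3 : 3 ≤ v.val := by omega
    have hlt : (if v.val % 2 = 1 then v.val + 1 else v.val - 1) < p + 3 := by
      have := v.isLt; split_ifs <;> omega
    have hN : (myTriMatch p).neighborFinset v = {⟨_, hlt⟩} := by
      ext u
      simp only [mem_neighborFinset, myTriMatch_adj, Finset.mem_singleton, Fin.ext_iff, ne_eq]
      have hu := u.isLt
      have hvlt := v.isLt
      split_ifs <;> omega
    rw [← card_neighborFinset_eq_degree, hN, if_neg hv, Finset.card_singleton]

lemma myTriEdges {p : ℕ} (hpe : p % 2 = 0) :
    2 * (myTriMatch p).edgeSet.ncard = p + 6 := by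
  classical
  have h1 : 2 * (myTriMatch p).edgeFinset.card = ∑ v, (myTriMatch p).degree v :=
    (SimpleGraph.sum_degrees_eq_twice_card_edges _).symm
  have h2 : ∑ v, (myTriMatch p).degree v = p + 6 := by
    have : ∀ v : Fin (p+3), (myTriMatch p).degree v = if v.val < 3 then 2 else 1 :=
      myDegTri hpe
    rw [Finset.sum_congr rfl fun v _ => this v]
    rw [Fin.sum_univ_eq_sum_range (fun i => if i < 3 then 2 else 1)]
    rw [Finset.sum_ite]
    have hf : Finset.filter (fun i => i < 3) (Finset.range (p+3)) = Finset.range 3 := by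
      ext i; simp; omega
    have hf2 : (Finset.filter (fun i => ¬ i < 3) (Finset.range (p+3))).card = p := by
      rw [Finset.filter_not, Finset.card_sdiff_of_subset (Finset.filter_subset _ _), hf]
      simp
    rw [hf, Finset.sum_const, Finset.sum_const, Finset.card_range, hf2]
    simp only [smul_eq_mul]
    omega
  have h3 : (myTriMatch p).edgeFinset.card = (myTriMatch p).edgeSet.ncard :=
    (Set.ncard_eq_toFinset_card' _).symm
  omega

lemma myNoBook {p : ℕ} (hp2 : 2 ≤ p) (hpe : p % 2 = 0) :
    ∀ x y : Fin (p+3), ((myTriMatch p)ᶜ).Adj x y →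
      ((myTriMatch p)ᶜ.commonNeighbors x y).ncard < p := by
  intro x y hadj
  obtain ⟨hxy, hnadj⟩ := hadj
  rw [myTriMatch_adj] at hnadj
  have hxyv : x.val ≠ y.val := fun h => hxy (Fin.ext h)
  have hor : ¬((x.val < 3 ∧ y.val < 3) ∨
      (3 ≤ x.val ∧ 3 ≤ y.val ∧ (x.val+1)/2 = (y.val+1)/2)) := fun h => hnadj ⟨hxy, h⟩
  have key : ∃ a b : Fin (p+3), a ≠ b ∧ a ≠ x ∧ a ≠ y ∧ b ≠ x ∧ b ≠ y ∧
      ((myTriMatch p).Adj x a ∨ (myTriMatch p).Adj y a) ∧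
      ((myTriMatch p).Adj x b ∨ (myTriMatch p).Adj y b) := by
    by_cases hx3 : x.val < 3
    · by_cases hy3 : y.val < 3
      · exact absurd (Or.inl ⟨hx3, hy3⟩) hor
      · -- x in triangle, y outside
        refine ⟨⟨(x.val+1)%3, by omega⟩, ⟨(x.val+2)%3, by omega⟩, ?_, ?_, ?_, ?_, ?_,
          Or.inl ⟨?_, Or.inl ⟨hx3, (by omega : (x.val+1)%3 < 3)⟩⟩,
          Or.inl ⟨?_, Or.inl ⟨hx3, (by omega : (x.val+2)%3 < 3)⟩⟩⟩ <;>
          simp only [ne_eq, Fin.ext_iff] <;> omega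
    · by_cases hy3 : y.val < 3
      · refine ⟨⟨(y.val+1)%3, by omega⟩, ⟨(y.val+2)%3, by omega⟩, ?_, ?_, ?_, ?_, ?_,
          Or.inr ⟨?_, Or.inl ⟨hy3, (by omega : (y.val+1)%3 < 3)⟩⟩,
          Or.inr ⟨?_, Or.inl ⟨hy3, (by omega : (y.val+2)%3 < 3)⟩⟩⟩ <;>
          simp only [ne_eq, Fin.ext_iff] <;> omega
      · -- both matched vertices
        have hx3' : 3 ≤ x.val := by omega
        have hy3' : 3 ≤ y.val := by omega
        have hne : (x.val+1)/2 ≠ (y.val+1)/2 := by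
          intro h
          exact absurd (Or.inr ⟨hx3', hy3', h⟩) hor
        have hax : (if x.val % 2 = 1 then x.val + 1 else x.val - 1) < p + 3 := by
          have := x.isLt; split_ifs <;> omega
        have hby : (if y.val % 2 = 1 then y.val + 1 else y.val - 1) < p + 3 := by
          have := y.isLt; split_ifs <;> omega
        have hxb := x.isLt
        have hyb := y.isLt
        refine ⟨⟨_, hax⟩, ⟨_, hby⟩, ?_, ?_, ?_, ?_, ?_,
          Or.inl ⟨?_, Or.inr ⟨hx3',
            (by split_ifs <;> omega : 3 ≤ (if x.val % 2 = 1 then x.val + 1 else x.val - 1)),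
            (by split_ifs <;> omega :
              (x.val+1)/2 = ((if x.val % 2 = 1 then x.val + 1 else x.val - 1)+1)/2)⟩⟩,
          Or.inr ⟨?_, Or.inr ⟨hy3',
            (by split_ifs <;> omega : 3 ≤ (if y.val % 2 = 1 then y.val + 1 else y.val - 1)),
            (by split_ifs <;> omega :
              (y.val+1)/2 = ((if y.val % 2 = 1 then y.val + 1 else y.val - 1)+1)/2)⟩⟩⟩ <;>
          simp only [ne_eq, Fin.ext_iff] <;> split_ifs <;> omega
  obtain ⟨a, b, hab, hax, hay, hbx, hby, ha, hb⟩ := key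
  classical
  set S : Finset (Fin (p+3)) := ((((univ : Finset (Fin (p+3))).erase x).erase y).erase a).erase b
    with hS
  have hsub : (myTriMatch p)ᶜ.commonNeighbors x y ⊆ ↑S := by
    intro z hz
    obtain ⟨hzx, hzy⟩ := hz
    have hz1 : z ≠ x := fun h => (myTriMatch p)ᶜ.irrefl (h ▸ hzx)
    have hz2 : z ≠ y := fun h => (myTriMatch p)ᶜ.irrefl (h ▸ hzy)
    have hz3 : z ≠ a := by
      rintro rfl
      rcases ha with h | h
      · exact hzx.2 h
      · exact hzy.2 h
    have hz4 : z ≠ b := by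
      rintro rfl
      rcases hb with h | h
      · exact hzx.2 h
      · exact hzy.2 h
    simp [hS, hz1, hz2, hz3, hz4]
  have hScard : S.card = p - 1 := by
    rw [hS]
    rw [Finset.card_erase_of_mem (by simp [hbx, hby, Ne.symm hab]),
      Finset.card_erase_of_mem (by simp [hax, hay]),
      Finset.card_erase_of_mem (by simp [Ne.symm hxy]),
      Finset.card_erase_of_mem (by simp)]
    simp only [Finset.card_univ, Fintype.card_fin]
    omega
  calc ((myTriMatch p)ᶜ.commonNeighbors x y).ncard ≤ (↑S : Set (Fin (p+3))).ncard :=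
        Set.ncard_le_ncard hsub (Set.toFinite _)
    _ = S.card := Set.ncard_coe_finset _
    _ < p := by omega

theorem stmt5 (p : ℕ) (hp : 1 ≤ p) (hev : Even p) :
    bookTuranNumber (p + 3) p = p * (p + 4) / 2 := by
  classical
  have hpe : p % 2 = 0 := Nat.even_iff.1 hev
  have hp2 : 2 ≤ p := by omega
  set S : Set ℕ :=
    {e : ℕ | ∃ G : SimpleGraph (Fin (p+3)), ¬ G.ContainsBook p ∧ G.edgeSet.ncard = e} with hSdef
  have hub : ∀ e ∈ S, e ≤ p * (p + 4) / 2 := by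
    rintro e ⟨G, hG, rfl⟩
    exact myUpper hp2 hpe G hG
  have hnb : ¬ ((myTriMatch p)ᶜ).ContainsBook p := by
    rintro ⟨x, y, hadj, hcard⟩
    have := myNoBook hp2 hpe x y hadj
    omega
  have hcnt : ((myTriMatch p)ᶜ).edgeSet.ncard = p * (p + 4) / 2 := by
    have h1 := myComplCard (myTriMatch p)
    have h2 := myTriEdges (p := p) hpe
    have h3 := myChoose p hpe
    generalize hg : p * (p + 4) = X at h3 ⊢
    omega
  have hmem : p * (p + 4) / 2 ∈ S := ⟨(myTriMatch p)ᶜ, hnb, hcnt⟩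
  rw [bookTuranNumber]
  exact le_antisymm (csSup_le ⟨_, hmem⟩ hub) (le_csSup ⟨_, hub⟩ hmem)
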